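/- Define the Chebyshev-type polynomials S_0(x) = 0, S_1(x) = 1, S_{n+1}(x) = x·S_n(x) − S_{n−1}(x). Let A, B be 2×2 real matrices with determinant 1 such that tr(B·A^{−1}) = 2. Then for every n ≥ 1: tr(B·A^{n−1}) = S_n(tr A)·tr(B) − 2·S_{n−1}(tr A), and tr(A^n) = S_n(tr A)·tr(A) − 2·S_{n−1}(tr A). Consequently |tr(B·A^{n−1}) − tr(A^n)| = |S_n(tr A)|·|tr(B) − tr(A)|. -/
import Mathlib

/-- The Chebyshev-type polynomials: `S₀ = 0`, `S₁ = 1`,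
`S_{n+1}(x) = x·S_n(x) − S_{n−1}(x)`. -/
def chebS : ℕ → ℝ → ℝ
  | 0, _ => 0
  | 1, _ => 1
  | (n + 2), x => x * chebS (n + 1) x - chebS n x

lemma sq_eq (A : Matrix (Fin 2) (Fin 2) ℝ) (hA : A.det = 1) :
    A * A = A.trace • A - 1 := by
  have hd := A.det_fin_two
  rw [hA] at hd
  ext i j
  fin_cases i <;> fin_cases j <;>
    simp [Matrix.mul_apply, Matrix.trace_fin_two, Fin.sum_univ_two, Matrix.one_apply] <;>
    nlinarith [hd]

lemma pow_eq (A : Matrix (Fin 2) (Fin 2) ℝ) (hA : A.det = 1) :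
    ∀ n : ℕ, A ^ (n + 1) = chebS (n + 1) A.trace • A - chebS n A.trace • 1 := by
  intro n
  induction n using Nat.twoStepInduction with
  | zero => simp [chebS]
  | one =>
      have := sq_eq A hA
      simp [chebS, pow_succ, pow_one, this]
  | more n _ ih2 =>
      rw [pow_succ, ih2, Matrix.sub_mul, Matrix.smul_mul, Matrix.smul_mul, one_mul,
        show A * A = A.trace • A - 1 from sq_eq A hA]
      show _ = chebS (n + 1 + 2) A.trace • A - chebS (n + 2) A.trace • (1 : Matrix (Fin 2) (Fin 2) ℝ)
      rw [show chebS (n + 1 + 2) A.trace = A.trace * chebS (n + 2) A.trace - chebS (n+1) A.trace from rfl]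
      rw [smul_sub]
      module

theorem trace_relations_chebyshev
    (A B : Matrix (Fin 2) (Fin 2) ℝ)
    (hA : A.det = 1) (hB : B.det = 1)
    (htr : (B * A⁻¹).trace = 2) :
    ∀ n : ℕ, 1 ≤ n →
      (B * A ^ (n - 1)).trace = chebS n A.trace * B.trace - 2 * chebS (n - 1) A.trace ∧
      (A ^ n).trace = chebS n A.trace * A.trace - 2 * chebS (n - 1) A.trace ∧
      |(B * A ^ (n - 1)).trace - (A ^ n).trace| = |chebS n A.trace| * |B.trace - A.trace| := by
  have hinv : A⁻¹ = A.trace • 1 - A := by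
    apply Matrix.inv_eq_right_inv
    have := sq_eq A hA
    rw [Matrix.mul_sub, Matrix.mul_smul, mul_one, this]
    abel
  have hBA : (B * A).trace = A.trace * B.trace - 2 := by
    rw [hinv, Matrix.mul_sub, Matrix.mul_smul, mul_one] at htr
    rw [Matrix.trace_sub, Matrix.trace_smul] at htr
    simp only [smul_eq_mul] at htr
    linarith
  intro n hn
  obtain ⟨m, rfl⟩ := Nat.exists_eq_add_of_le hn
  simp only [Nat.add_comm 1 m, Nat.add_sub_cancel]
  have htrA : (A ^ (m + 1)).trace = chebS (m + 1) A.trace * A.trace - 2 * chebS m A.trace := by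
    rw [pow_eq A hA m, Matrix.trace_sub, Matrix.trace_smul, Matrix.trace_smul, Matrix.trace_one]
    simp [Matrix.trace_fin_two]
    ring
  have htrB : (B * A ^ m).trace = chebS (m + 1) A.trace * B.trace - 2 * chebS m A.trace := by
    cases m with
    | zero => simp [chebS]
    | succ k =>
        rw [pow_eq A hA k, Matrix.mul_sub, Matrix.mul_smul, Matrix.mul_smul, mul_one,
          Matrix.trace_sub, Matrix.trace_smul, Matrix.trace_smul, hBA]
        rw [show chebS (k + 2) A.trace = A.trace * chebS (k + 1) A.trace - chebS k A.trace from rfl]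
        simp only [smul_eq_mul]
        ring
  refine ⟨htrB, htrA, ?_⟩
  rw [htrA, htrB, ← abs_mul]
  ring_nf
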